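/- Fix τ > 0 and c > 0, and let r_n ≤ ⌊(n−1)/2⌋ be a sequence with r_n → ∞ and (log n)^2 r_n^3 / n → 0. Suppose that for each n the random variables X_1, ..., X_n and i.i.d. standard normals X̃_1, ..., X̃_n are defined on a common probability space with E( exp( (c/τ) max_{1≤j≤n} |S_j − S̃_j| ) ) ≤ 1 + n/τ, where S_j = ∑_{i=1}^j X_i and S̃_j = ∑_{i=1}^j X̃_i. Define S_{n,k} = √(2/n) ∑_{j=1}^n X_j cos(2πjk/n) and S̃_{n,k} = √(2/n) ∑_{j=1}^n X̃_j cos(2πjk/n). Then for every ε > 0, P( max_{1 ≤ k ≤ r_n} | S_{n,k} − S̃_{n,k} | > ε √(2π/r_n) ) → 0 as n → ∞. -/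

import Mathlib

open MeasureTheory ProbabilityTheory Filter Real

lemma my_cos_lip (x y : ℝ) : |Real.cos x - Real.cos y| ≤ |x - y| := by
  have h1 : |Real.sin ((x+y)/2)| ≤ 1 := Real.abs_sin_le_one _
  have h2 : |Real.sin ((x-y)/2)| ≤ |x-y|/2 := by
    have h := Real.abs_sin_le_abs (x := (x-y)/2)
    rwa [abs_div, abs_two] at h
  rw [Real.cos_sub_cos, abs_mul, abs_mul]
  have h3 : |(-2:ℝ)| = 2 := by norm_num
  rw [h3]
  nlinarith [abs_nonneg (Real.sin ((x+y)/2)), abs_nonneg (Real.sin ((x-y)/2)),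
    abs_nonneg (x-y)]

lemma my_abel_sum (d a : ℕ → ℝ) (n : ℕ) :
    ∑ j ∈ Finset.Icc 1 (n+1), d j * a j
      = (∑ j ∈ Finset.Icc 1 n, (∑ i ∈ Finset.Icc 1 j, d i) * (a j - a (j+1)))
        + (∑ i ∈ Finset.Icc 1 (n+1), d i) * a (n+1) := by
  induction n with
  | zero => simp
  | succ m ih =>
    rw [Finset.sum_Icc_succ_top (by omega : 1 ≤ m+1+1) (fun j => d j * a j), ih,
        Finset.sum_Icc_succ_top (by omega : 1 ≤ m+1)
          (fun j => (∑ i ∈ Finset.Icc 1 j, d i) * (a j - a (j+1))),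
        Finset.sum_Icc_succ_top (by omega : 1 ≤ m+1+1) d]
    ring

lemma my_le_biSup {s : Finset ℕ} (f : ℕ → ℝ) {j : ℕ} (hj : j ∈ s) :
    f j ≤ ⨆ i ∈ s, f i := by
  have hfin : (insert (0:ℝ) ((s.image f : Finset ℝ) : Set ℝ)).Finite :=
    (s.image f).finite_toSet.insert 0
  have hb : BddAbove (Set.range fun i => ⨆ _ : i ∈ s, f i) := by
    apply hfin.bddAbove.mono
    rintro x ⟨i, rfl⟩
    show (⨆ _ : i ∈ s, f i) ∈ _
    by_cases hi : i ∈ s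
    · rw [(ciSup_pos hi : (⨆ _ : i ∈ s, f i) = f i)]
      exact Set.mem_insert_iff.2 (Or.inr (by simpa using Finset.mem_image_of_mem f hi))
    · haveI : IsEmpty (i ∈ s) := isEmpty_Prop.2 hi
      rw [Real.iSup_of_isEmpty]
      exact Set.mem_insert _ _
  calc f j = ⨆ _ : j ∈ s, f j := ((ciSup_pos hj : (⨆ _ : j ∈ s, f j) = f j)).symm
    _ ≤ ⨆ i ∈ s, f i := le_ciSup hb j

lemma my_biSup_le {s : Finset ℕ} (f : ℕ → ℝ) {a : ℝ} (ha : 0 ≤ a)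
    (h : ∀ j ∈ s, f j ≤ a) : (⨆ i ∈ s, f i) ≤ a :=
  Real.iSup_le (fun i => Real.iSup_le (fun hi => h i hi) ha) ha

lemma my_abel_bound (d a : ℕ → ℝ) (m : ℕ) (L Mv : ℝ) (hMv : 0 ≤ Mv)
    (ha : ∀ j, |a j| ≤ 1) (haL : ∀ j, |a j - a (j+1)| ≤ L)
    (hM : ∀ j ∈ Finset.Icc 1 (m+1), |∑ i ∈ Finset.Icc 1 j, d i| ≤ Mv) :
    |∑ j ∈ Finset.Icc 1 (m+1), d j * a j| ≤ (m * L + 1) * Mv := by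
  have hL : 0 ≤ L := le_trans (abs_nonneg _) (haL 0)
  rw [my_abel_sum]
  calc |(∑ j ∈ Finset.Icc 1 m, (∑ i ∈ Finset.Icc 1 j, d i) * (a j - a (j+1)))
        + (∑ i ∈ Finset.Icc 1 (m+1), d i) * a (m+1)|
      ≤ (∑ j ∈ Finset.Icc 1 m, |(∑ i ∈ Finset.Icc 1 j, d i) * (a j - a (j+1))|)
        + |(∑ i ∈ Finset.Icc 1 (m+1), d i) * a (m+1)| :=
        (abs_add_le _ _).trans (by gcongr; exact Finset.abs_sum_le_sum_abs _ _)
    _ ≤ (∑ _j ∈ Finset.Icc 1 m, Mv * L) + Mv * 1 := by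
        gcongr with j hj
        · rw [abs_mul]
          exact mul_le_mul (hM j (Finset.mem_Icc.2 ⟨(Finset.mem_Icc.1 hj).1,
            (Finset.mem_Icc.1 hj).2.trans (by omega)⟩)) (haL j) (abs_nonneg _) hMv
        · rw [abs_mul]
          exact mul_le_mul (hM (m+1) (Finset.mem_Icc.2 ⟨by omega, le_rfl⟩)) (ha (m+1))
            (abs_nonneg _) hMv
    _ = (m * L + 1) * Mv := by
        rw [Finset.sum_const, Nat.card_Icc]
        simp only [nsmul_eq_mul]
        push_cast
        ring

/-- Coupling step in the proof of Proposition 2: if for each `n` the variables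
`X_1, …, X_n` are coupled with i.i.d. standard normals `X̃_1, …, X̃_n` so that
`E exp((c/τ) max_{1≤j≤n} |S_j − S̃_j|) ≤ 1 + n/τ`, and `r_n ≤ ⌊(n-1)/2⌋`, `r_n → ∞`,
`(log n)² r_n³ / n → 0`, then the probability that some trigonometric weighted sum
deviates from its Gaussian counterpart by more than `ε√(2π/r_n)` tends to `0`. -/
theorem coupling_max_deviation_probability
    {Ω : Type*} [MeasureSpace Ω] [IsProbabilityMeasure (ℙ : Measure Ω)]
    (τ c : ℝ) (hτ : 0 < τ) (hc : 0 < c)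
    (r : ℕ → ℕ)
    (hrle : ∀ n, r n ≤ (n - 1) / 2)
    (hrtop : Tendsto r atTop atTop)
    (hrate : Tendsto (fun n : ℕ => (Real.log n) ^ 2 * (r n : ℝ) ^ 3 / n) atTop (nhds 0))
    (X Xt : ℕ → ℕ → Ω → ℝ)  -- the triangular arrays `X_{n,j}` and `X̃_{n,j}`
    (hXmeas : ∀ n j, Measurable (X n j))
    (hXtmeas : ∀ n j, Measurable (Xt n j))
    -- for each `n`, `X̃_1, …, X̃_n` are i.i.d. standard normal :
    (hXtindep : ∀ n, iIndepFun
      (fun j : Fin n => Xt n ((j : ℕ) + 1)) ℙ)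
    (hXtgauss : ∀ n, ∀ j ∈ Finset.Icc 1 n, Measure.map (Xt n j) ℙ = gaussianReal 0 1)
    -- the coupling bound for the partial sums :
    (hcoupling : ∀ n, ∫⁻ ω, ENNReal.ofReal (Real.exp ((c / τ) *
        ⨆ j ∈ Finset.Icc 1 n,
          |(∑ i ∈ Finset.Icc 1 j, X n i ω) - ∑ i ∈ Finset.Icc 1 j, Xt n i ω|)) ∂ℙ
      ≤ ENNReal.ofReal (1 + n / τ))
    (S St : ℕ → ℕ → Ω → ℝ)
    (hS : ∀ n k ω, S n k ω = Real.sqrt (2 / n) *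
      ∑ j ∈ Finset.Icc 1 n, X n j ω * Real.cos (2 * π * j * k / n))
    (hSt : ∀ n k ω, St n k ω = Real.sqrt (2 / n) *
      ∑ j ∈ Finset.Icc 1 n, Xt n j ω * Real.cos (2 * π * j * k / n)) :
    ∀ ε : ℝ, 0 < ε →
      Tendsto
        (fun n => ℙ {ω | ∃ k ∈ Finset.Icc 1 (r n),
          ε * Real.sqrt (2 * π / r n) < |S n k ω - St n k ω|})
        atTop (nhds 0) := by
  intro ε hε
  have hq : 0 < c / τ := div_pos hc hτ
  set B : ℕ → ℝ := fun n =>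
    ε * Real.sqrt (2 * π / r n) / (Real.sqrt (2 / n) * (1 + 2 * π * r n)) with hB
  set G : ℕ → ℝ := fun n => (c / τ) * B n - Real.log (1 + n / τ) with hGdef
  -- Step 1 : eventual Markov bound
  have hbound : ∀ᶠ n in atTop, ℙ {ω | ∃ k ∈ Finset.Icc 1 (r n),
      ε * Real.sqrt (2 * π / r n) < |S n k ω - St n k ω|}
      ≤ ENNReal.ofReal (Real.exp (-G n)) := by
    filter_upwards [eventually_ge_atTop 1, hrtop.eventually_ge_atTop 1] with n hn hrn
    obtain ⟨m, rfl⟩ : ∃ m, n = m + 1 := ⟨n - 1, by omega⟩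
    set Mf : Ω → ℝ := fun ω => ⨆ j ∈ Finset.Icc 1 (m+1),
      |(∑ i ∈ Finset.Icc 1 j, X (m+1) i ω) - ∑ i ∈ Finset.Icc 1 j, Xt (m+1) i ω| with hMf
    have h1mem : (1 : ℕ) ∈ Finset.Icc 1 (m+1) := Finset.mem_Icc.2 ⟨le_rfl, by omega⟩
    have hMnonneg : ∀ ω, 0 ≤ Mf ω := by
      intro ω
      simp only [hMf]
      exact le_trans (abs_nonneg _) (my_le_biSup (fun j => |(∑ i ∈ Finset.Icc 1 j, X (m+1) i ω) - ∑ i ∈ Finset.Icc 1 j, Xt (m+1) i ω|) h1mem)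
    have hnpos : (0:ℝ) < ((m+1 : ℕ) : ℝ) := by positivity
    have hdenpos : 0 < Real.sqrt (2 / ((m+1 : ℕ) : ℝ)) * (1 + 2 * π * (r (m+1) : ℝ)) := by
      have h1 : (0:ℝ) < 2 / ((m+1 : ℕ) : ℝ) := by positivity
      have h2 : (0:ℝ) < 1 + 2 * π * (r (m+1) : ℝ) := by positivity
      exact mul_pos (Real.sqrt_pos.2 h1) h2
    -- deterministic Abel-summation bound
    have hdet : ∀ ω, ∀ k ∈ Finset.Icc 1 (r (m+1)),
        |S (m+1) k ω - St (m+1) k ω|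
          ≤ (Real.sqrt (2 / ((m+1 : ℕ) : ℝ)) * (1 + 2 * π * (r (m+1) : ℝ))) * Mf ω := by
      intro ω k hk
      obtain ⟨hk1, hk2⟩ := Finset.mem_Icc.1 hk
      have hSd : S (m+1) k ω - St (m+1) k ω
          = Real.sqrt (2 / ((m+1 : ℕ) : ℝ)) * ∑ j ∈ Finset.Icc 1 (m+1),
            (X (m+1) j ω - Xt (m+1) j ω) * Real.cos (2 * π * j * k / ((m+1 : ℕ) : ℝ)) := by
        rw [hS, hSt, ← mul_sub, ← Finset.sum_sub_distrib]
        congr 1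
        exact Finset.sum_congr rfl fun j _ => (sub_mul _ _ _).symm
      have h_a : ∀ j : ℕ, |Real.cos (2 * π * j * k / ((m+1 : ℕ) : ℝ))| ≤ 1 :=
        fun j => Real.abs_cos_le_one _
      have h_aL : ∀ j : ℕ, |Real.cos (2 * π * j * k / ((m+1 : ℕ) : ℝ))
          - Real.cos (2 * π * (j+1 : ℕ) * k / ((m+1 : ℕ) : ℝ))|
          ≤ 2 * π * k / ((m+1 : ℕ) : ℝ) := by
        intro j
        refine (my_cos_lip _ _).trans (le_of_eq ?_)
        have harg : (2 * π * (j:ℕ) * k / ((m+1 : ℕ) : ℝ))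
            - 2 * π * ((j+1 : ℕ) : ℝ) * k / ((m+1 : ℕ) : ℝ)
            = -(2 * π * k / ((m+1 : ℕ) : ℝ)) := by
          push_cast
          ring
        rw [harg, abs_neg, abs_of_nonneg (by positivity)]
      have h_M : ∀ j ∈ Finset.Icc 1 (m+1),
          |∑ i ∈ Finset.Icc 1 j, (X (m+1) i ω - Xt (m+1) i ω)| ≤ Mf ω := by
        intro j hj
        rw [Finset.sum_sub_distrib]
        simp only [hMf]
        exact my_le_biSup (fun j => |(∑ i ∈ Finset.Icc 1 j, X (m+1) i ω) - ∑ i ∈ Finset.Icc 1 j, Xt (m+1) i ω|) hj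
      have key := my_abel_bound (fun j => X (m+1) j ω - Xt (m+1) j ω)
        (fun j => Real.cos (2 * π * j * k / ((m+1 : ℕ) : ℝ))) m
        (2 * π * k / ((m+1 : ℕ) : ℝ)) (Mf ω) (hMnonneg ω) h_a h_aL h_M
      have hcoef : (m:ℝ) * (2 * π * k / ((m+1 : ℕ) : ℝ)) + 1 ≤ 1 + 2 * π * (r (m+1) : ℝ) := by
        have hk0 : (0:ℝ) ≤ 2 * π * k := by positivity
        have h1 : (m:ℝ) * (2 * π * k / ((m+1 : ℕ) : ℝ)) ≤ 2 * π * k := by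
          rw [mul_comm, div_mul_eq_mul_div, div_le_iff₀ hnpos]
          have hm1 : (m:ℝ) ≤ ((m+1 : ℕ) : ℝ) := by push_cast; linarith
          nlinarith
        have h2 : 2 * π * (k:ℝ) ≤ 2 * π * (r (m+1) : ℝ) := by
          have hkr : (k:ℝ) ≤ (r (m+1) : ℝ) := Nat.cast_le.2 hk2
          nlinarith [Real.pi_pos]
        linarith
      calc |S (m+1) k ω - St (m+1) k ω|
          = Real.sqrt (2 / ((m+1 : ℕ) : ℝ)) * |∑ j ∈ Finset.Icc 1 (m+1),
              (X (m+1) j ω - Xt (m+1) j ω) * Real.cos (2 * π * j * k / ((m+1 : ℕ) : ℝ))| := by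
            rw [hSd, abs_mul, abs_of_nonneg (Real.sqrt_nonneg _)]
        _ ≤ Real.sqrt (2 / ((m+1 : ℕ) : ℝ)) *
              (((m:ℝ) * (2 * π * k / ((m+1 : ℕ) : ℝ)) + 1) * Mf ω) :=
            mul_le_mul_of_nonneg_left key (Real.sqrt_nonneg _)
        _ ≤ Real.sqrt (2 / ((m+1 : ℕ) : ℝ)) * ((1 + 2 * π * (r (m+1) : ℝ)) * Mf ω) :=
            mul_le_mul_of_nonneg_left
              (mul_le_mul_of_nonneg_right hcoef (hMnonneg ω)) (Real.sqrt_nonneg _)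
        _ = (Real.sqrt (2 / ((m+1 : ℕ) : ℝ)) * (1 + 2 * π * (r (m+1) : ℝ))) * Mf ω := by ring
    -- measurability of Mf
    have hne : (Finset.Icc 1 (m+1)).Nonempty := ⟨1, h1mem⟩
    have hMmeas : Measurable Mf := by
      have heq : Mf = (Finset.Icc 1 (m+1)).sup' hne
          (fun j ω => |(∑ i ∈ Finset.Icc 1 j, X (m+1) i ω)
            - ∑ i ∈ Finset.Icc 1 j, Xt (m+1) i ω|) := by
        funext ω
        rw [Finset.sup'_apply]
        simp only [hMf]
        apply le_antisymm
        · refine my_biSup_le _ ?_ (fun j hj => Finset.le_sup' (fun j => |(∑ i ∈ Finset.Icc 1 j, X (m+1) i ω) - ∑ i ∈ Finset.Icc 1 j, Xt (m+1) i ω|) hj)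
          exact le_trans (abs_nonneg _) (Finset.le_sup'
            (fun j => |(∑ i ∈ Finset.Icc 1 j, X (m+1) i ω)
              - ∑ i ∈ Finset.Icc 1 j, Xt (m+1) i ω|) h1mem)
        · exact Finset.sup'_le _ _ fun j hj => my_le_biSup (fun j => |(∑ i ∈ Finset.Icc 1 j, X (m+1) i ω) - ∑ i ∈ Finset.Icc 1 j, Xt (m+1) i ω|) hj
      rw [heq]
      apply Finset.measurable_sup' hne
      intro j _
      exact ((Finset.measurable_sum _ (fun i _ => hXmeas (m+1) i)).sub
        (Finset.measurable_sum _ (fun i _ => hXtmeas (m+1) i))).abs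
    -- Markov
    have hF : AEMeasurable (fun ω => ENNReal.ofReal (Real.exp ((c/τ) * Mf ω))) ℙ :=
      (ENNReal.measurable_ofReal.comp
        (Real.measurable_exp.comp (hMmeas.const_mul _))).aemeasurable
    have hint : ∫⁻ ω, ENNReal.ofReal (Real.exp ((c/τ) * Mf ω)) ∂ℙ
        ≤ ENNReal.ofReal (1 + ((m+1 : ℕ) : ℝ) / τ) := by
      simp only [hMf]
      exact hcoupling (m+1)
    have hmarkov := mul_meas_ge_le_lintegral₀ hF
      (ENNReal.ofReal (Real.exp ((c/τ) * B (m+1))))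
    have hexp_pos : 0 < Real.exp ((c/τ) * B (m+1)) := Real.exp_pos _
    have ha0 : (ENNReal.ofReal (Real.exp ((c/τ) * B (m+1)))) ≠ 0 := by
      simp [ENNReal.ofReal_eq_zero, not_le, hexp_pos]
    have hsub : {ω | ∃ k ∈ Finset.Icc 1 (r (m+1)),
        ε * Real.sqrt (2 * π / (r (m+1) : ℝ)) < |S (m+1) k ω - St (m+1) k ω|}
        ⊆ {ω | ENNReal.ofReal (Real.exp ((c/τ) * B (m+1)))
            ≤ ENNReal.ofReal (Real.exp ((c/τ) * Mf ω))} := by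
      rintro ω ⟨k, hk, hlt⟩
      have hMlt : B (m+1) < Mf ω := by
        simp only [hB]
        rw [div_lt_iff₀ hdenpos]
        calc ε * Real.sqrt (2 * π / (r (m+1) : ℝ)) < |S (m+1) k ω - St (m+1) k ω| := hlt
          _ ≤ (Real.sqrt (2 / ((m+1 : ℕ) : ℝ)) * (1 + 2 * π * (r (m+1) : ℝ))) * Mf ω :=
              hdet ω k hk
          _ = Mf ω * (Real.sqrt (2 / ((m+1 : ℕ) : ℝ)) * (1 + 2 * π * (r (m+1) : ℝ))) :=
              mul_comm _ _
      exact ENNReal.ofReal_le_ofReal (Real.exp_le_exp.2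
        (mul_le_mul_of_nonneg_left hMlt.le hq.le))
    have hτpos : (0:ℝ) < 1 + ((m+1 : ℕ) : ℝ) / τ := by positivity
    calc ℙ {ω | ∃ k ∈ Finset.Icc 1 (r (m+1)),
          ε * Real.sqrt (2 * π / (r (m+1) : ℝ)) < |S (m+1) k ω - St (m+1) k ω|}
        ≤ ℙ {ω | ENNReal.ofReal (Real.exp ((c/τ) * B (m+1)))
            ≤ ENNReal.ofReal (Real.exp ((c/τ) * Mf ω))} := measure_mono hsub
      _ ≤ ENNReal.ofReal (1 + ((m+1 : ℕ) : ℝ) / τ)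
            / ENNReal.ofReal (Real.exp ((c/τ) * B (m+1))) := by
          rw [ENNReal.le_div_iff_mul_le (Or.inl ha0) (Or.inl ENNReal.ofReal_ne_top)]
          calc ℙ {ω | ENNReal.ofReal (Real.exp ((c/τ) * B (m+1)))
                ≤ ENNReal.ofReal (Real.exp ((c/τ) * Mf ω))}
              * ENNReal.ofReal (Real.exp ((c/τ) * B (m+1)))
              = ENNReal.ofReal (Real.exp ((c/τ) * B (m+1)))
                * ℙ {ω | ENNReal.ofReal (Real.exp ((c/τ) * B (m+1)))
                  ≤ ENNReal.ofReal (Real.exp ((c/τ) * Mf ω))} := mul_comm _ _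
            _ ≤ ∫⁻ ω, ENNReal.ofReal (Real.exp ((c/τ) * Mf ω)) ∂ℙ := hmarkov
            _ ≤ ENNReal.ofReal (1 + ((m+1 : ℕ) : ℝ) / τ) := hint
      _ = ENNReal.ofReal (Real.exp (-G (m+1))) := by
          rw [← ENNReal.ofReal_div_of_pos hexp_pos]
          congr 1
          have hGe : Real.exp (-G (m+1))
              = (1 + ((m+1 : ℕ) : ℝ) / τ) / Real.exp ((c/τ) * B (m+1)) := by
            simp only [hGdef]
            rw [neg_sub, Real.exp_sub, Real.exp_log hτpos]
          rw [hGe]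
  -- Step 2 : G → ∞
  have hGlb : ∀ᶠ n : ℕ in atTop,
      Real.log n - Real.log (1 + 1/τ) ≤ G n := by
    have hδ : (0:ℝ) < ((c/τ) * (ε * Real.sqrt π) / 16)^2 := by
      have hπ : (0:ℝ) < Real.sqrt π := Real.sqrt_pos.2 Real.pi_pos
      positivity
    filter_upwards [hrate.eventually (eventually_lt_nhds hδ),
      eventually_ge_atTop 3, hrtop.eventually_ge_atTop 1] with n hLn hn3 hrn1
    have hn0 : (0:ℝ) < (n:ℝ) := by
      have : (3:ℝ) ≤ (n:ℝ) := by exact_mod_cast hn3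
      linarith
    have hl0 : (0:ℝ) < Real.log n :=
      Real.log_pos (by exact_mod_cast (by omega : (1:ℕ) < n))
    have hu1 : (1:ℝ) ≤ Real.sqrt (r n) := by
      have h1 : (1:ℝ) ≤ (r n : ℝ) := by exact_mod_cast hrn1
      calc (1:ℝ) = Real.sqrt 1 := Real.sqrt_one.symm
        _ ≤ Real.sqrt (r n) := Real.sqrt_le_sqrt h1
    have hu0 : (0:ℝ) < Real.sqrt (r n) := lt_of_lt_of_le one_pos hu1
    have hv0 : (0:ℝ) < Real.sqrt n := Real.sqrt_pos.2 hn0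
    have hrnu : (r n : ℝ) = (Real.sqrt (r n))^2 := (Real.sq_sqrt (by positivity)).symm
    have hnv : (n : ℝ) = (Real.sqrt n)^2 := (Real.sq_sqrt hn0.le).symm
    set l := Real.log n
    set u := Real.sqrt (r n)
    set v := Real.sqrt n
    have h1 : l^2 * u^6 ≤ ((c/τ) * (ε * Real.sqrt π) / 16)^2 * v^2 := by
      rw [div_lt_iff₀ hn0] at hLn
      calc l^2 * u^6 = l^2 * ((r n : ℝ))^3 := by rw [hrnu]; ring
        _ ≤ ((c/τ) * (ε * Real.sqrt π) / 16)^2 * n := hLn.le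
        _ = ((c/τ) * (ε * Real.sqrt π) / 16)^2 * v^2 := by rw [hnv]
    have h2 : l * u^3 ≤ ((c/τ) * (ε * Real.sqrt π) / 16) * v := by
      have hC : (0:ℝ) ≤ (c/τ) * (ε * Real.sqrt π) / 16 := by positivity
      have hsq : (l * u^3)^2 ≤ (((c/τ) * (ε * Real.sqrt π) / 16) * v)^2 := by
        calc (l * u^3)^2 = l^2 * u^6 := by ring
          _ ≤ ((c/τ) * (ε * Real.sqrt π) / 16)^2 * v^2 := h1
          _ = (((c/τ) * (ε * Real.sqrt π) / 16) * v)^2 := by ring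
      have h4 := Real.sqrt_le_sqrt hsq
      rwa [Real.sqrt_sq (by positivity), Real.sqrt_sq (by positivity)] at h4
    have hBeq : B n = ε * Real.sqrt π * v / (u * (1 + 2 * π * (r n : ℝ))) := by
      simp only [hB]
      rw [Real.sqrt_div (by positivity : (0:ℝ) ≤ 2 * π) ((r n : ℝ)),
        Real.sqrt_div (by norm_num : (0:ℝ) ≤ 2) (n:ℝ),
        Real.sqrt_mul (by norm_num : (0:ℝ) ≤ 2) π]
      have h2' : Real.sqrt 2 ≠ 0 := by positivity
      have hden : (0:ℝ) < 1 + 2 * π * (r n : ℝ) := by positivity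
      field_simp
      ring
    have h8 : 1 + 2 * π * (r n : ℝ) ≤ 8 * u^2 := by
      rw [← hrnu]
      have hπ : π < 3.15 := Real.pi_lt_d2
      have hr1 : (1:ℝ) ≤ (r n : ℝ) := by exact_mod_cast hrn1
      nlinarith [Real.pi_pos]
    have hB2 : 2 * l ≤ (c/τ) * B n := by
      rw [hBeq]
      have hu3 : (0:ℝ) < u^3 := by positivity
      have hden1 : (0:ℝ) < u * (1 + 2 * π * (r n : ℝ)) := by positivity
      have step1 : ε * Real.sqrt π * v / (8 * u^3)
          ≤ ε * Real.sqrt π * v / (u * (1 + 2 * π * (r n : ℝ))) := by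
        apply div_le_div_of_nonneg_left (by positivity) hden1
        calc u * (1 + 2 * π * (r n : ℝ)) ≤ u * (8 * u^2) :=
              mul_le_mul_of_nonneg_left h8 hu0.le
          _ = 8 * u^3 := by ring
      have step2 : 2 * l ≤ (c/τ) * (ε * Real.sqrt π * v / (8 * u^3)) := by
        rw [show (c/τ) * (ε * Real.sqrt π * v / (8 * u^3))
            = ((c/τ) * (ε * Real.sqrt π) * v / 8) / u^3 from by ring,
          le_div_iff₀ hu3]
        linarith [h2]
      exact step2.trans (mul_le_mul_of_nonneg_left step1 hq.le)
    have hlog : Real.log (1 + (n:ℝ)/τ) ≤ l + Real.log (1 + 1/τ) := by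
      have hn1 : (1:ℝ) ≤ (n:ℝ) := by exact_mod_cast (by omega : 1 ≤ n)
      have hle : 1 + (n:ℝ)/τ ≤ (n:ℝ) * (1 + 1/τ) := by
        rw [mul_add, mul_one, mul_one_div]
        linarith
      calc Real.log (1 + (n:ℝ)/τ) ≤ Real.log ((n:ℝ) * (1 + 1/τ)) :=
            Real.log_le_log (by positivity) hle
        _ = l + Real.log (1 + 1/τ) := by
            rw [Real.log_mul (by positivity) (by positivity)]
    simp only [hGdef]
    linarith [hB2, hlog, hl0]
  have hG : Tendsto G atTop atTop := by
    apply tendsto_atTop_mono' atTop hGlb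
    have h1 : Tendsto (fun n : ℕ => Real.log n) atTop atTop :=
      Real.tendsto_log_atTop.comp tendsto_natCast_atTop_atTop
    simpa [sub_eq_add_neg] using
      tendsto_atTop_add_const_right atTop (-(Real.log (1 + 1/τ))) h1
  -- Step 3
  have h0 : Tendsto (fun n => ENNReal.ofReal (Real.exp (-G n))) atTop (nhds 0) := by
    have h1 : Tendsto (fun n => Real.exp (-G n)) atTop (nhds 0) :=
      Real.tendsto_exp_atBot.comp (tendsto_neg_atTop_atBot.comp hG)
    simpa using ENNReal.tendsto_ofReal h1
  exact tendsto_of_tendsto_of_tendsto_of_le_of_le' tendsto_const_nhds h0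
    (Eventually.of_forall fun n => zero_le) hbound
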